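/- Let lambda have CDF F_lambda(x) = 1 - e^{-x/P} + (x/(Psi+x)) e^{-(x+Psi)/P} on [0, infinity), let I be exponential with mean P_n independent of lambda, and eta > 0. Then the CDF of S = lambda / (I + eta) is F_S(x) = 1 - (1 - e^{-Psi/P}) e^{-x eta / P} / (1 + x P_n / P) - (Psi/(x P_n)) e^{Psi/(x P_n) + eta/P_n} * Gamma(0, (eta + Psi/x)(1/P_n + x/P)) for x > 0, where Gamma(0, z) = integral from z to infinity of e^{-t}/t dt. -/

import Mathlib

open MeasureTheory Real Set

lemma shiftIoi (f : ℝ → ℝ) (a d : ℝ) :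
    ∫ y in Set.Ioi a, f (y + d) = ∫ t in Set.Ioi (a + d), f t := by
  have h := (measurePreserving_add_right volume d).setIntegral_preimage_emb
    (measurableEmbedding_addRight d) f (Set.Ioi (a + d))
  rw [preimage_add_const_Ioi] at h
  simpa using h

lemma expInt {b : ℝ} (hb : 0 < b) : ∫ y in Set.Ioi (0:ℝ), exp (-(b * y)) = 1 / b := by
  have h := integral_comp_mul_left_Ioi (fun s => exp (-s)) 0 hb
  simp only [mul_zero, integral_exp_neg_Ioi, neg_zero, exp_zero, smul_eq_mul, mul_one] at h
  rw [h]
  simp [one_div]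

lemma gammaInt {b d : ℝ} (hb : 0 < b) (hd : 0 < d) :
    ∫ y in Set.Ioi (0:ℝ), exp (-(b * (y + d))) / (y + d)
      = ∫ t in Set.Ioi (b * d), exp (-t) / t := by
  rw [shiftIoi (fun t => exp (-(b * t)) / t) 0 d, zero_add]
  have h := integral_comp_mul_left_Ioi (fun s => exp (-s) / s) d hb
  have h2 : ∀ t ∈ Set.Ioi d, exp (-(b * t)) / t = b * (exp (-(b * t)) / (b * t)) := by
    intro t ht
    have ht' : 0 < t := hd.trans ht
    field_simp
  rw [setIntegral_congr_fun measurableSet_Ioi h2, MeasureTheory.integral_const_mul, h, smul_eq_mul]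
  rw [← mul_assoc, mul_inv_cancel₀ hb.ne', one_mul]

lemma intOn_exp {b : ℝ} (hb : 0 < b) :
    IntegrableOn (fun y => exp (-(b * y))) (Set.Ioi (0:ℝ)) := by
  simpa [neg_mul] using exp_neg_integrableOn_Ioi 0 hb

lemma intOn_gamma {b d : ℝ} (hb : 0 < b) (hd : 0 < d) :
    IntegrableOn (fun y => exp (-(b * (y + d))) / (y + d)) (Set.Ioi (0:ℝ)) := by
  have hmeas : AEStronglyMeasurable (fun y => exp (-(b * (y + d))) / (y + d))
      (volume.restrict (Set.Ioi (0:ℝ))) := by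
    apply ContinuousOn.aestronglyMeasurable _ measurableSet_Ioi
    apply ContinuousOn.div
    · exact ((continuous_exp.comp (continuous_const.mul (continuous_id.add continuous_const)).neg).continuousOn)
    · exact (continuous_id.add continuous_const).continuousOn
    · intro y hy; have : 0 < y := hy; positivity
  apply Integrable.mono (((intOn_exp hb).const_mul (exp (-(b*d)) / d)))  hmeas
  filter_upwards [ae_restrict_mem measurableSet_Ioi] with y hy
  have hy' : (0:ℝ) < y := hy
  rw [Real.norm_eq_abs, Real.norm_eq_abs, abs_of_nonneg (by positivity),
    abs_of_nonneg (by positivity)]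
  rw [div_le_iff₀ (by linarith)]
  have h1 : exp (-(b * (y + d))) = exp (-(b*y)) * exp (-(b*d)) := by
    rw [← Real.exp_add]; ring_nf
  have key : exp (-(b*d)) / d * exp (-(b*y)) * (y + d)
      = exp (-(b*y)) * exp (-(b*d)) * ((y+d)/d) := by ring
  rw [h1, key]
  have hone : (1:ℝ) ≤ (y+d)/d := by rw [le_div_iff₀ hd]; linarith
  exact le_mul_of_one_le_right (by positivity) hone

open ProbabilityTheory

/-- CDF of the received SINR `S = λ/(I + η)`: here `λ` has the CDF
`F_λ(x) = 1 - e^{-x/P} + (x/(Ψ+x)) e^{-(x+Ψ)/P}` on `[0,∞)`, `I` is exponential with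
mean `Pn` independent of `λ`, and `η > 0` is the noise power.  For `x > 0`,
`F_S(x) = 1 - (1 - e^{-Ψ/P}) e^{-xη/P}/(1 + x Pn/P)
        - (Ψ/(x Pn)) e^{Ψ/(x Pn) + η/Pn} Γ(0, (η + Ψ/x)(1/Pn + x/P))`,
where `Γ(0,z) = ∫_z^∞ e^{-t}/t dt`. -/
theorem cdf_sinr_with_interference
    {Ω : Type*} [MeasurableSpace Ω] (μ : Measure Ω) [IsProbabilityMeasure μ]
    (lam I : Ω → ℝ) (hlmeas : Measurable lam) (hImeas : Measurable I)
    (P Pn Psi eta : ℝ) (hP : 0 < P) (hPn : 0 < Pn) (hPsi : 0 < Psi) (heta : 0 < eta)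
    (hlamCDF : ∀ x : ℝ, 0 ≤ x →
      μ {ω | lam ω ≤ x} =
        ENNReal.ofReal (1 - Real.exp (-x / P) + x / (Psi + x) * Real.exp (-(x + Psi) / P)))
    (hlamNonneg : ∀ᵐ ω ∂μ, 0 ≤ lam ω)
    (hICDF : ∀ x : ℝ, 0 ≤ x →
      μ {ω | I ω ≤ x} = ENNReal.ofReal (1 - Real.exp (-x / Pn)))
    (hindep : IndepFun lam I μ) :
    ∀ x : ℝ, 0 < x →
      (μ {ω | lam ω / (I ω + eta) ≤ x}).toReal
        = 1 - (1 - Real.exp (-Psi / P)) * Real.exp (-x * eta / P) / (1 + x * Pn / P)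
          - (Psi / (x * Pn)) * Real.exp (Psi / (x * Pn) + eta / Pn) *
            (∫ t in Set.Ioi ((eta + Psi / x) * (1 / Pn + x / P)), Real.exp (-t) / t) := by
  intro x hx
  set r : ℝ := Pn⁻¹ with hr
  have hrpos : 0 < r := inv_pos.2 hPn
  set bb : ℝ := x / P + r with hbb
  set dd : ℝ := eta + Psi / x with hdd
  have hbbpos : 0 < bb := by rw [hbb]; positivity
  have hddpos : 0 < dd := by rw [hdd]; positivity
  set C2 : ℝ := (1 - Real.exp (-Psi / P)) * r * Real.exp (-x * eta / P) with hC2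
  set C3 : ℝ := Psi / (x * Pn) * Real.exp (Psi / (x * Pn) + eta / Pn) with hC3
  set G : ℝ → ℝ := fun a =>
    r * Real.exp (-(r * a)) *
      (1 - Real.exp (-(x * (a + eta)) / P)
        + x * (a + eta) / (Psi + x * (a + eta)) * Real.exp (-(x * (a + eta) + Psi) / P))
    with hG
  -- I ≤ 0 is null
  have hI0 : μ {ω | I ω ≤ 0} = 0 := by
    have := hICDF 0 le_rfl
    simpa using this
  -- the law of I is the exponential measure with rate r
  have hmapI : μ.map I = expMeasure r := by
    haveI : IsProbabilityMeasure (μ.map I) := Measure.isProbabilityMeasure_map hImeas.aemeasurable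
    refine Measure.ext_of_Iic _ _ (fun a => ?_)
    rw [Measure.map_apply hImeas measurableSet_Iic]
    have hpdf : gammaPDF 1 r = exponentialPDF r := rfl
    have hexp : expMeasure r (Set.Iic a) = ∫⁻ y in Set.Iic a, exponentialPDF r y := by
      rw [expMeasure, gammaMeasure, withDensity_apply _ measurableSet_Iic, hpdf]
    rw [hexp, lintegral_exponentialPDF_eq_antiDeriv hrpos]
    by_cases ha : 0 ≤ a
    · rw [if_pos ha]
      have h := hICDF a ha
      have harg : -a / Pn = -(r * a) := by rw [hr]; field_simp
      rw [show (I ⁻¹' Set.Iic a) = {ω | I ω ≤ a} from rfl, h, harg]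
    · rw [if_neg ha, ENNReal.ofReal_zero]
      refine measure_mono_null (fun ω (h : I ω ≤ a) => ?_) hI0
      exact h.trans (le_of_not_ge ha)
  -- replace the event by the linear one
  have hsets : μ {ω | lam ω / (I ω + eta) ≤ x} = μ {ω | lam ω ≤ x * (I ω + eta)} := by
    apply measure_congr
    rw [Filter.eventuallyEq_set]
    have hae : ∀ᵐ ω ∂μ, 0 < I ω := by
      rw [ae_iff]
      have h : {ω | ¬0 < I ω} = {ω | I ω ≤ 0} := by ext ω; simp [not_lt]
      rw [h]; exact hI0
    filter_upwards [hae] with ω hω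
    have hpos : 0 < I ω + eta := by linarith
    show lam ω / (I ω + eta) ≤ x ↔ lam ω ≤ x * (I ω + eta)
    rw [div_le_iff₀ hpos]
  -- pass to the product measure
  haveI : IsProbabilityMeasure (μ.map lam) := Measure.isProbabilityMeasure_map hlmeas.aemeasurable
  have hAmeas : MeasurableSet {p : ℝ × ℝ | p.2 ≤ x * (p.1 + eta)} :=
    measurableSet_le measurable_snd ((measurable_fst.add_const eta).const_mul x)
  have hprod : μ.map (fun ω => (I ω, lam ω)) = (μ.map I).prod (μ.map lam) :=
    (indepFun_iff_map_prod_eq_prod_map_map hImeas.aemeasurable hlmeas.aemeasurable).1 hindep.symm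
  have hμA : μ {ω | lam ω ≤ x * (I ω + eta)}
      = ((μ.map I).prod (μ.map lam)) {p : ℝ × ℝ | p.2 ≤ x * (p.1 + eta)} := by
    rw [← hprod, Measure.map_apply (hImeas.prodMk hlmeas) hAmeas]
    rfl
  rw [hsets, hμA, hmapI, Measure.prod_apply hAmeas]
  have hsec : ∀ a : ℝ, (Prod.mk a ⁻¹' {p : ℝ × ℝ | p.2 ≤ x * (p.1 + eta)})
      = Set.Iic (x * (a + eta)) := fun a => rfl
  simp_rw [hsec]
  -- unfold the exponential density
  have hpdfmeas : Measurable (gammaPDF 1 r) := (measurable_gammaPDFReal 1 r).ennreal_ofReal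
  rw [expMeasure, gammaMeasure,
    lintegral_withDensity_eq_lintegral_mul_non_measurable _ hpdfmeas
      (ae_of_all _ fun y => ENNReal.ofReal_lt_top)]
  rw [← lintegral_add_compl
      ((gammaPDF 1 r * fun a => (μ.map lam) (Set.Iic (x * (a + eta)))))
      (measurableSet_Ioi (a := (0:ℝ)))]
  have hne : ∀ᵐ a : ℝ ∂volume, a ≠ 0 := by
    rw [ae_iff]
    have h : {a : ℝ | ¬a ≠ 0} = {0} := by ext a; simp
    rw [h, Real.volume_singleton]
  have hcompl : (∫⁻ a in (Set.Ioi (0:ℝ))ᶜ,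
      (gammaPDF 1 r * fun a => (μ.map lam) (Set.Iic (x * (a + eta)))) a) = 0 := by
    rw [Set.compl_Ioi]
    rw [setLIntegral_congr_fun_ae measurableSet_Iic (g := fun _ => 0)
      (by filter_upwards [hne] with a ha hmem
          have hlt : a < 0 := lt_of_le_of_ne hmem ha
          simp [gammaPDF_of_neg hlt])]
    simp
  rw [hcompl, add_zero]
  -- rewrite the integrand on the positive part as ofReal G
  have hIoi : (∫⁻ a in Set.Ioi (0:ℝ),
        (gammaPDF 1 r * fun a => (μ.map lam) (Set.Iic (x * (a + eta)))) a)
      = ∫⁻ a in Set.Ioi (0:ℝ), ENNReal.ofReal (G a) := by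
    refine setLIntegral_congr_fun_ae measurableSet_Ioi (ae_of_all _ fun a ha => ?_)
    have hapos : (0:ℝ) < a := ha
    have htnn : (0:ℝ) ≤ x * (a + eta) := by positivity
    have hmap : (μ.map lam) (Set.Iic (x * (a + eta)))
        = ENNReal.ofReal (1 - Real.exp (-(x * (a + eta)) / P)
            + x * (a + eta) / (Psi + x * (a + eta)) * Real.exp (-(x * (a + eta) + Psi) / P)) := by
      rw [Measure.map_apply hlmeas measurableSet_Iic]
      exact hlamCDF _ htnn
    have hpdfval : gammaPDF 1 r a = ENNReal.ofReal (r * Real.exp (-(r * a))) := by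
      have h : gammaPDF 1 r a = exponentialPDF r a := rfl
      rw [h, exponentialPDF_of_nonneg hapos.le]
    show gammaPDF 1 r a * (μ.map lam) (Set.Iic (x * (a + eta))) = ENNReal.ofReal (G a)
    rw [hpdfval, hmap, ← ENNReal.ofReal_mul (by positivity), hG]
  rw [hIoi]
  -- nonnegativity of G on Ioi 0
  have hGnn : ∀ a ∈ Set.Ioi (0:ℝ), 0 ≤ G a := by
    intro a ha
    have hapos : (0:ℝ) < a := ha
    rw [hG]
    have h1 : Real.exp (-(x * (a + eta)) / P) ≤ 1 := by
      rw [Real.exp_le_one_iff]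
      have hnn : (0:ℝ) ≤ x * (a + eta) := by positivity
      exact div_nonpos_iff.2 (Or.inr ⟨by linarith, hP.le⟩)
    have h2 : (0:ℝ) ≤ x * (a + eta) / (Psi + x * (a + eta)) := by positivity
    have h3 : (0:ℝ) ≤ Real.exp (-(x * (a + eta) + Psi) / P) := (Real.exp_pos _).le
    refine mul_nonneg (by positivity) ?_
    nlinarith [mul_nonneg h2 h3]
  -- pointwise decomposition of G
  have key : ∀ a ∈ Set.Ioi (0:ℝ), G a
      = r * Real.exp (-(r * a)) - C2 * Real.exp (-(bb * a))
        - C3 * (Real.exp (-(bb * (a + dd))) / (a + dd)) := by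
    intro a ha
    have hapos : (0:ℝ) < a := ha
    have haddpos : (0:ℝ) < a + dd := by linarith
    have hden : Psi + x * (a + eta) = x * (a + dd) := by
      rw [hdd]; field_simp; ring
    have h1 : Real.exp (-(bb * a)) = Real.exp (-(x * a) / P) * Real.exp (-(r * a)) := by
      rw [← Real.exp_add]; congr 1; rw [hbb]; ring
    have h2 : Real.exp (-(x * (a + eta)) / P)
        = Real.exp (-(x * a) / P) * Real.exp (-x * eta / P) := by
      rw [← Real.exp_add]; congr 1; ring
    have h3 : Real.exp (-(x * (a + eta) + Psi) / P)
        = Real.exp (-(x * a) / P) * Real.exp (-x * eta / P) * Real.exp (-Psi / P) := by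
      rw [← Real.exp_add, ← Real.exp_add]; congr 1; ring
    have h4 : Real.exp (Psi / (x * Pn) + eta / Pn) * Real.exp (-(bb * (a + dd)))
        = Real.exp (-(x * a) / P) * Real.exp (-(r * a)) * Real.exp (-x * eta / P)
            * Real.exp (-Psi / P) := by
      rw [← Real.exp_add, ← Real.exp_add, ← Real.exp_add, ← Real.exp_add]
      congr 1
      rw [hbb, hdd, hr]
      field_simp
      ring
    have h5 : C3 * (Real.exp (-(bb * (a + dd))) / (a + dd))
        = Psi / (x * Pn) *
            ((Real.exp (Psi / (x * Pn) + eta / Pn) * Real.exp (-(bb * (a + dd)))) / (a + dd)) := by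
      rw [hC3]; ring
    rw [hG]
    simp only []
    rw [hden, h2, h3, hC2, h1, h5, h4]
    generalize Real.exp (-(x * a) / P) = A
    generalize Real.exp (-(r * a)) = B
    generalize Real.exp (-x * eta / P) = Cc
    generalize Real.exp (-Psi / P) = D
    rw [hdd, hr]
    field_simp
    ring
  -- integrability
  have hRHSint : IntegrableOn (fun a =>
      r * Real.exp (-(r * a)) - C2 * Real.exp (-(bb * a))
        - C3 * (Real.exp (-(bb * (a + dd))) / (a + dd))) (Set.Ioi (0:ℝ)) :=
    (((intOn_exp hrpos).const_mul r).sub ((intOn_exp hbbpos).const_mul C2)).sub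
      ((intOn_gamma hbbpos hddpos).const_mul C3)
  have hGint : IntegrableOn G (Set.Ioi (0:ℝ)) := by
    refine hRHSint.congr ?_
    filter_upwards [ae_restrict_mem measurableSet_Ioi] with a ha
    exact (key a ha).symm
  have hGnn' : 0 ≤ᵐ[volume.restrict (Set.Ioi (0:ℝ))] G := by
    filter_upwards [ae_restrict_mem measurableSet_Ioi] with a ha
    exact hGnn a ha
  rw [← MeasureTheory.ofReal_integral_eq_lintegral_ofReal hGint hGnn',
    ENNReal.toReal_ofReal (setIntegral_nonneg measurableSet_Ioi hGnn)]
  -- evaluate the integral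
  rw [setIntegral_congr_fun measurableSet_Ioi key]
  have int1 : IntegrableOn (fun a => r * Real.exp (-(r * a))) (Set.Ioi (0:ℝ)) :=
    (intOn_exp hrpos).const_mul r
  have int2 : IntegrableOn (fun a => C2 * Real.exp (-(bb * a))) (Set.Ioi (0:ℝ)) :=
    (intOn_exp hbbpos).const_mul C2
  have int3 : IntegrableOn (fun a => C3 * (Real.exp (-(bb * (a + dd))) / (a + dd)))
      (Set.Ioi (0:ℝ)) := (intOn_gamma hbbpos hddpos).const_mul C3
  have int12 : IntegrableOn
      (fun a => r * Real.exp (-(r * a)) - C2 * Real.exp (-(bb * a))) (Set.Ioi (0:ℝ)) :=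
    int1.sub int2
  rw [integral_sub int12 int3, integral_sub int1 int2,
    MeasureTheory.integral_const_mul, MeasureTheory.integral_const_mul,
    MeasureTheory.integral_const_mul,
    expInt hrpos, expInt hbbpos, gammaInt hbbpos hddpos]
  have hz : bb * dd = dd * (1 / Pn + x / P) := by
    rw [hbb, hr]; ring
  rw [hz]
  have h1 : r * (1 / r) = 1 := by field_simp
  have h2 : C2 * (1 / bb)
      = (1 - Real.exp (-Psi / P)) * Real.exp (-x * eta / P) / (1 + x * Pn / P) := by
    rw [hC2, hbb, hr]
    field_simp
    ring
  rw [h1, h2]
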